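/- Let f : ℝ^m → ℝ be C¹, α ∈ (0,1), δ₀ > 0, and let h : ℝ^m → (0, δ₀] be a continuous function satisfying f(x − h(x)∇f(x)) − f(x) ≤ −α h(x)‖∇f(x)‖² for every x ∈ ℝ^m. Define the sequence x_{n+1} = x_n − h(x_n)∇f(x_n) from any initial point x₀. Then every cluster point of (x_n) is a critical point of f, and either lim_{n→∞} f(x_n) = −∞ or lim_{n→∞} ‖x_{n+1} − x_n‖ = 0. -/

import Mathlib

open Gradient

open Filter in
private lemma grad_continuous {m : ℕ} (f : EuclideanSpace ℝ (Fin m) → ℝ)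
    (hf : ContDiff ℝ 1 f) : Continuous (∇ f) := by
  have h1 : Continuous (fderiv ℝ f) := hf.continuous_fderiv one_ne_zero
  exact (InnerProductSpace.toDual ℝ (EuclideanSpace ℝ (Fin m))).symm.continuous.comp h1

/-- Let `f : ℝ^m → ℝ` be `C¹`, `α ∈ (0,1)`, `δ₀ > 0`, and
`h : ℝ^m → (0, δ₀]` continuous with `f(x − h(x)∇f(x)) − f(x) ≤ −α h(x)‖∇f(x)‖²` for all `x`.
For the sequence `x_{n+1} = x_n − h(x_n)∇f(x_n)` from any initial point: every cluster point
is a critical point of `f`, and either `f(x n) → −∞` or `‖x_{n+1} − x_n‖ → 0`. -/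
theorem continuous_backtracking_GD_properties
    {m : ℕ} (f : EuclideanSpace ℝ (Fin m) → ℝ) (hf : ContDiff ℝ 1 f)
    (α δ₀ : ℝ) (hα0 : 0 < α) (hα1 : α < 1) (hδ₀ : 0 < δ₀)
    (h : EuclideanSpace ℝ (Fin m) → ℝ) (hcont : Continuous h)
    (hpos : ∀ x, 0 < h x) (hle : ∀ x, h x ≤ δ₀)
    (harmijo : ∀ x, f (x - h x • ∇ f x) - f x ≤ -(α * h x * ‖∇ f x‖ ^ 2))
    (x : ℕ → EuclideanSpace ℝ (Fin m))
    (hupd : ∀ n, x (n + 1) = x n - h (x n) • ∇ f (x n)) :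
    (∀ p, MapClusterPt p Filter.atTop x → ∇ f p = 0) ∧
      (Filter.Tendsto (fun n => f (x n)) Filter.atTop Filter.atBot ∨
        Filter.Tendsto (fun n => ‖x (n + 1) - x n‖) Filter.atTop (nhds 0)) := by
  classical
  set g : EuclideanSpace ℝ (Fin m) → ℝ := fun y => h y * ‖∇ f y‖ ^ 2 with hg
  have hgcont : Continuous g := by
    apply hcont.mul
    exact ((grad_continuous f hf).norm.pow 2)
  have hgnn : ∀ y, 0 ≤ g y := fun y => mul_nonneg (hpos y).le (by positivity)
  have key : ∀ n, f (x (n + 1)) - f (x n) ≤ -(α * g (x n)) := by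
    intro n
    rw [hupd n, hg]
    simpa [mul_assoc] using harmijo (x n)
  have hanti : Antitone (fun n => f (x n)) := by
    apply antitone_nat_of_succ_le
    intro n
    have := key n
    nlinarith [hgnn (x n)]
  rcases tendsto_of_antitone hanti with hbot | ⟨l, hl⟩
  · -- f (x n) → -∞
    constructor
    · intro p hp
      exfalso
      have hc : MapClusterPt (f p) Filter.atTop (f ∘ x) :=
        hp.continuousAt_comp hf.continuous.continuousAt
      have : Filter.NeBot (nhds (f p) ⊓ Filter.map (f ∘ x) Filter.atTop) := hc
      have hle' : Filter.map (f ∘ x) Filter.atTop ≤ Filter.atBot := hbot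
      have : Filter.NeBot (nhds (f p) ⊓ Filter.atBot) :=
        this.mono (inf_le_inf_left _ hle')
      have hmem1 : Set.Ioi (f p - 1) ∈ nhds (f p) := Ioi_mem_nhds (by linarith)
      have hmem2 : Set.Iic (f p - 1) ∈ (Filter.atBot : Filter ℝ) := Filter.Iic_mem_atBot _
      have : (Set.Ioi (f p - 1) ∩ Set.Iic (f p - 1)).Nonempty :=
        this.nonempty_of_mem (Filter.inter_mem_inf hmem1 hmem2)
      obtain ⟨y, hy1, hy2⟩ := this
      exact absurd (Set.mem_Iic.1 hy2) (not_le.2 (Set.mem_Ioi.1 hy1))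
    · exact Or.inl hbot
  · -- f (x n) → l
    have hdiff : Filter.Tendsto (fun n => f (x n) - f (x (n + 1))) Filter.atTop (nhds 0) := by
      have := hl.sub (hl.comp (Filter.tendsto_add_atTop_nat 1))
      simpa using this
    have hsq : Filter.Tendsto (fun n => g (x n)) Filter.atTop (nhds 0) := by
      have h1 : ∀ n, α * g (x n) ≤ f (x n) - f (x (n + 1)) := fun n => by linarith [key n]
      have h2 : Filter.Tendsto (fun n => α * g (x n)) Filter.atTop (nhds 0) :=
        tendsto_of_tendsto_of_tendsto_of_le_of_le tendsto_const_nhds hdiff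
          (fun n => mul_nonneg hα0.le (hgnn (x n))) h1
      have h3 : (fun n => g (x n)) = fun n => α⁻¹ * (α * g (x n)) := by
        funext n; field_simp
      rw [h3]
      simpa using h2.const_mul α⁻¹
    constructor
    · intro p hp
      have hc : MapClusterPt (g p) Filter.atTop (g ∘ x) :=
        hp.continuousAt_comp hgcont.continuousAt
      have hgp : g p = 0 := by
        have h1 : Filter.NeBot (nhds (g p) ⊓ Filter.map (g ∘ x) Filter.atTop) := hc
        have h2 : Filter.map (g ∘ x) Filter.atTop ≤ nhds 0 := hsq
        have h3 : Filter.NeBot (nhds (g p) ⊓ nhds (0 : ℝ)) :=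
          h1.mono (inf_le_inf_left _ h2)
        exact eq_of_nhds_neBot h3
      have hnorm : ‖∇ f p‖ ^ 2 = 0 := by
        have := hpos p
        rw [hg] at hgp
        simp only at hgp
        rcases mul_eq_zero.1 hgp with h' | h'
        · exact absurd h' this.ne'
        · exact h'
      simpa using (pow_eq_zero_iff (n := 2) (by norm_num)).1 hnorm
    · right
      have heq : ∀ n, ‖x (n + 1) - x n‖ = h (x n) * ‖∇ f (x n)‖ := by
        intro n
        rw [hupd n]
        rw [sub_sub_cancel_left, norm_neg, norm_smul, Real.norm_eq_abs,
          abs_of_pos (hpos (x n))]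
      have hsq2 : Filter.Tendsto (fun n => ‖x (n + 1) - x n‖ ^ 2) Filter.atTop (nhds 0) := by
        have hδterm : Filter.Tendsto (fun n => δ₀ * g (x n)) Filter.atTop (nhds 0) := by
          simpa using hsq.const_mul δ₀
        apply tendsto_of_tendsto_of_tendsto_of_le_of_le tendsto_const_nhds hδterm
        · intro n; positivity
        · intro n
          show ‖x (n + 1) - x n‖ ^ 2 ≤ δ₀ * g (x n)
          rw [heq n, mul_pow, hg]
          have h1 : h (x n) ^ 2 ≤ δ₀ * h (x n) := by
            have := hpos (x n); have := hle (x n); nlinarith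
          have h2 : (0:ℝ) ≤ ‖∇ f (x n)‖ ^ 2 := by positivity
          calc h (x n) ^ 2 * ‖∇ f (x n)‖ ^ 2 ≤ δ₀ * h (x n) * ‖∇ f (x n)‖ ^ 2 := by
                exact mul_le_mul_of_nonneg_right h1 h2
            _ = δ₀ * (h (x n) * ‖∇ f (x n)‖ ^ 2) := by ring
      have heq2 : ∀ n, Real.sqrt (‖x (n + 1) - x n‖ ^ 2) = ‖x (n + 1) - x n‖ :=
        fun n => Real.sqrt_sq (norm_nonneg _)
      have hfinal := (Real.continuous_sqrt.tendsto 0).comp hsq2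
      simp only [Function.comp_def, heq2, Real.sqrt_zero] at hfinal
      exact hfinal
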